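/- Causality of the chained flow (coordinate dependence): let (B₁,…,Bₙ) be the topological batching of a DAG G on {1,…,d}, and for each j let Tⱼ be a partial causal transformation over Bⱼ whose parent conditioning sets are given by the DAG parents: (Tⱼ(z))ᵢ = fᵢ(zᵢ, (zₖ)_{k ∈ pa(i)}) for i ∈ Bⱼ, and (Tⱼ(z))ᵢ = zᵢ for i ∉ Bⱼ. Let T = Tₙ ∘ … ∘ T₁ and X = T(U). Then for every i ∈ Bⱼ, Xᵢ = fᵢ(Uᵢ, (Xₖ)_{k ∈ pa(i)}); that is, Xᵢ is determined by Uᵢ and the final output values of its parents alone. -/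
import Mathlib


/-- Sources of the sub-digraph induced on `s`: vertices of `s` with no predecessor in `s`. -/
def batchSources {V : Type*} [DecidableEq V] (E : V → V → Prop) [DecidableRel E]
    (s : Finset V) : Finset V :=
  s.filter fun v => ∀ u ∈ s, ¬ E u v

/-- Vertices remaining after `k` rounds of topological batching. -/
def batchRemaining {V : Type*} [Fintype V] [DecidableEq V] (E : V → V → Prop)
    [DecidableRel E] : ℕ → Finset V
  | 0 => Finset.univ
  | k + 1 => batchRemaining E k \ batchSources E (batchRemaining E k)

/-- The `k`-th batch (0-indexed) of the topological batching. -/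
def batch {V : Type*} [Fintype V] [DecidableEq V] (E : V → V → Prop) [DecidableRel E]
    (k : ℕ) : Finset V :=
  batchSources E (batchRemaining E k)

lemma mem_batchSources {V : Type*} [DecidableEq V] {E : V → V → Prop} [DecidableRel E]
    {s : Finset V} {v : V} : v ∈ batchSources E s ↔ v ∈ s ∧ ∀ u ∈ s, ¬ E u v :=
  Finset.mem_filter

lemma mem_batch {V : Type*} [Fintype V] [DecidableEq V] {E : V → V → Prop} [DecidableRel E]
    {k : ℕ} {v : V} : v ∈ batch E k ↔ v ∈ batchRemaining E k ∧ ∀ u ∈ batchRemaining E k, ¬ E u v :=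
  mem_batchSources

lemma batchRemaining_succ {V : Type*} [Fintype V] [DecidableEq V] (E : V → V → Prop)
    [DecidableRel E] (k : ℕ) :
    batchRemaining E (k + 1) = batchRemaining E k \ batch E k := rfl

/-- Causality of the chained flow: `X = Tₙ ∘ ⋯ ∘ T₁ (U)` where layer `j` is a partial causal
transformation over the `j`-th batch (0-indexed) of the topological batching of the DAG `E`,
with coordinate maps `f i` conditioned on the DAG-parents.  Then for every `i` in batch `j`,
`X i = f i (U i) ((X k)_{k ∈ pa i})`: the output `X i` is determined by `U i` and the final
output values of the parents of `i` alone. -/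
theorem chained_flow_causality {d : ℕ} (E : Fin d → Fin d → Prop) [DecidableRel E]
    (hacyc : ∀ v : Fin d, ¬ Relation.TransGen E v v)
    (f : Fin d → ℝ → (Fin d → ℝ) → ℝ)
    (T : ℕ → (Fin d → ℝ) → (Fin d → ℝ))
    (hTin : ∀ j, ∀ z : Fin d → ℝ, ∀ i ∈ batch E j,
      T j z i = f i (z i) (fun k => if E k i then z k else 0))
    (hTout : ∀ j, ∀ z : Fin d → ℝ, ∀ i ∉ batch E j, T j z i = z i)
    (U : Fin d → ℝ) (Z : ℕ → Fin d → ℝ)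
    (hZ0 : Z 0 = U) (hZs : ∀ m, Z (m + 1) = T m (Z m))
    (n : ℕ) (hn : batchRemaining E n = ∅) :
    ∀ j, ∀ i ∈ batch E j,
      Z n i = f i (U i) (fun k => if E k i then Z n k else 0) := by
  intro j i hi
  have hbatch_sub : ∀ m, batch E m ⊆ batchRemaining E m := fun m v hv => (mem_batch.1 hv).1
  have hmono : ∀ m, batchRemaining E (m + 1) ⊆ batchRemaining E m := fun m => by
    rw [batchRemaining_succ]; exact Finset.sdiff_subset
  have hmono' : ∀ m m', m ≤ m' → batchRemaining E m' ⊆ batchRemaining E m := by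
    intro m m' h
    induction h with
    | refl => exact subset_rfl
    | step _ ih => exact (hmono _).trans ih
  -- Z m v = U v while v is still remaining
  have hfix : ∀ m, ∀ v ∈ batchRemaining E m, Z m v = U v := by
    intro m
    induction m with
    | zero => intro v _; rw [hZ0]
    | succ m ih =>
      intro v hv
      rw [batchRemaining_succ] at hv
      have hv' := Finset.mem_sdiff.1 hv
      have hnb : v ∉ batch E m := hv'.2
      rw [hZs, hTout m _ v hnb, ih v hv'.1]
  -- Z stays constant once v is removed
  have hstay : ∀ m v, v ∉ batchRemaining E m → ∀ p, Z (m + p) v = Z m v := by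
    intro m v hv p
    induction p with
    | zero => rfl
    | succ p ih =>
      have hv2 : v ∉ batch E (m + p) :=
        fun h => hv (hmono' m (m + p) (Nat.le_add_right _ _) (hbatch_sub _ h))
      rw [show m + (p + 1) = (m + p) + 1 from rfl, hZs, hTout _ _ v hv2, ih]
  have hiR : i ∈ batchRemaining E j := hbatch_sub j hi
  have hjn : j + 1 ≤ n := by
    by_contra h
    have : i ∈ batchRemaining E n := hmono' n j (by omega) hiR
    simp [hn] at this
  have hpar : ∀ k, E k i → k ∉ batchRemaining E j := by
    have h2 := (mem_batch.1 hi).2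
    intro k hk hkR
    exact h2 k hkR hk
  have hnot : i ∉ batchRemaining E (j + 1) := by
    intro h
    rw [batchRemaining_succ] at h
    exact (Finset.mem_sdiff.1 h).2 hi
  have h1 : Z n i = Z (j + 1) i := by
    have := hstay (j + 1) i hnot (n - (j + 1))
    rwa [Nat.add_sub_cancel' hjn] at this
  have hstep : Z (j + 1) i = f i (U i) (fun k => if E k i then Z j k else 0) := by
    rw [hZs, hTin j (Z j) i hi, hfix j i hiR]
  rw [h1, hstep]
  congr 1
  funext k
  by_cases hk : E k i
  · simp only [hk, if_true]
    have := hstay j k (hpar k hk) (n - j)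
    rw [Nat.add_sub_cancel' (by omega : j ≤ n)] at this
    exact this.symm
  · simp [hk]
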